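/- The map φ(x,y) = (y(I+αxy)⁻¹(I+βxy), x(I+βyx)⁻¹(I+αyx)) maps pairs of symmetric positive definite matrices to pairs of symmetric positive definite matrices; in particular both components are symmetric. -/

import Mathlib

open Matrix

private lemma posSemidef_smul' {r : ℕ} {c : ℝ} (hc : 0 ≤ c)
    {M : Matrix (Fin r) (Fin r) ℝ} (hM : M.PosSemidef) : (c • M).PosSemidef := by
  refine ⟨?_, fun v => ?_⟩
  · unfold Matrix.IsHermitian
    rw [conjTranspose_smul, hM.1]
    simp
  · exact (hM.smul hc).2 v

private lemma posDef_conj' {r : ℕ} {D B : Matrix (Fin r) (Fin r) ℝ}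
    (hD : D.PosDef) (hB : IsUnit B) : (Bᴴ * D * B).PosDef := by
  refine ⟨Matrix.isHermitian_conjTranspose_mul_mul B hD.1, fun v hv => ?_⟩
  exact (hD.conjTranspose_mul_mul_same (B := B) (mulVec_injective_of_isUnit hB)).2 hv

set_option maxHeartbeats 1000000 in
private lemma phi_component {r : ℕ} (α β : ℝ) (hα : 0 ≤ α) (hβ : 0 ≤ β)
    (x y : Matrix (Fin r) (Fin r) ℝ) (hx : x.PosDef) (hy : y.PosDef) :
    (y * (1 + α • (x * y))⁻¹ * (1 + β • (x * y))).PosDef ∧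
    (y * (1 + α • (x * y))⁻¹ * (1 + β • (x * y))).IsSymm := by
  set B : Matrix (Fin r) (Fin r) ℝ := y⁻¹ + α • x with hBdef
  set C : Matrix (Fin r) (Fin r) ℝ := y⁻¹ + β • x with hCdef
  have hyu : IsUnit y := hy.isUnit
  have hy1 : y⁻¹ * y = 1 := nonsing_inv_mul y (isUnit_iff_isUnit_det y |>.1 hyu)
  have hy2 : y * y⁻¹ = 1 := mul_nonsing_inv y (isUnit_iff_isUnit_det y |>.1 hyu)
  have hB : B.PosDef := hy.inv.add_posSemidef (posSemidef_smul' hα hx.posSemidef)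
  have hBu : IsUnit B := hB.isUnit
  have hB1 : B⁻¹ * B = 1 := nonsing_inv_mul B (isUnit_iff_isUnit_det B |>.1 hBu)
  have hB2 : B * B⁻¹ = 1 := mul_nonsing_inv B (isUnit_iff_isUnit_det B |>.1 hBu)
  have hBy : B * y = 1 + α • (x * y) := by
    rw [hBdef, add_mul, hy1, smul_mul_assoc]
  have hCy : C * y = 1 + β • (x * y) := by
    rw [hCdef, add_mul, hy1, smul_mul_assoc]
  have hD : (C * y * B).PosDef := by
    have heq : C * y * B = y⁻¹ + (α + β) • x + (α * β) • (x * y * x) := by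
      rw [hCdef, hBdef]
      simp only [Matrix.add_mul, Matrix.mul_add, Matrix.smul_mul, Matrix.mul_smul,
        smul_smul, mul_assoc, hy1, hy2, mul_one, one_mul]
      module
    rw [heq]
    exact (hy.inv.add_posSemidef (posSemidef_smul' (by positivity) hx.posSemidef)).add_posSemidef
      (posSemidef_smul' (by positivity)
        (by have := hy.posSemidef.conjTranspose_mul_mul_same x
            rwa [hx.1.eq] at this))
  have hM : y * (1 + α • (x * y))⁻¹ * (1 + β • (x * y)) = B⁻¹ * (C * y * B) * B⁻¹ := by
    rw [← hBy, ← hCy, Matrix.mul_inv_rev, ← Matrix.mul_assoc y y⁻¹ B⁻¹, hy2,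
      Matrix.one_mul, Matrix.mul_assoc B⁻¹ (C * y * B) B⁻¹,
      Matrix.mul_assoc (C * y) B B⁻¹, hB2, Matrix.mul_one]
  have hBinvH : (B⁻¹)ᴴ = B⁻¹ := hB.inv.1
  have hpos : (y * (1 + α • (x * y))⁻¹ * (1 + β • (x * y))).PosDef := by
    have h := posDef_conj' hD hB.inv.isUnit
    rwa [hBinvH, ← hM] at h
  refine ⟨hpos, ?_⟩
  have := hpos.1
  rwa [Matrix.IsHermitian, conjTranspose_eq_transpose_of_trivial] at this

/-- The map `φ(x,y) = (y(I+αxy)⁻¹(I+βxy), x(I+βyx)⁻¹(I+αyx))` maps pairs of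
symmetric positive definite matrices to pairs of symmetric positive definite
matrices; in particular both components are symmetric. -/
theorem phiMap_posDef {r : ℕ} (α β : ℝ) (hα : 0 ≤ α) (hβ : 0 ≤ β)
    (x y : Matrix (Fin r) (Fin r) ℝ) (hx : x.PosDef) (hy : y.PosDef) :
    (y * (1 + α • (x * y))⁻¹ * (1 + β • (x * y))).PosDef ∧
    (y * (1 + α • (x * y))⁻¹ * (1 + β • (x * y))).IsSymm ∧
    (x * (1 + β • (y * x))⁻¹ * (1 + α • (y * x))).PosDef ∧
    (x * (1 + β • (y * x))⁻¹ * (1 + α • (y * x))).IsSymm := by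
  obtain ⟨h1, h2⟩ := phi_component α β hα hβ x y hx hy
  obtain ⟨h3, h4⟩ := phi_component β α hβ hα y x hy hx
  exact ⟨h1, h2, h3, h4⟩
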